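/- Let S be an n-dimensional subspace of ℝ^{n+k}, γ : ℝ → [0,1] a C¹ function, and X(x) = γ(|x|)·x. Then the divergence of X along S at a point x with r = |x| > 0 equals n·γ(r) + r·γ'(r)·(1 − |P_{S^⊥}(x/r)|²), where P_{S^⊥} is the orthogonal projection onto the orthogonal complement of S. -/

import Mathlib

open MeasureTheory Metric Set Filter
open scoped ENNReal Topology RealInnerProductSpace


variable {m : ℕ}

lemma my_hasFDerivAt_norm (x : EuclideanSpace ℝ (Fin m)) (hx : x ≠ 0) :
    HasFDerivAt (fun y : EuclideanSpace ℝ (Fin m) => ‖y‖) (‖x‖⁻¹ • innerSL ℝ x) x := by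
  have h1 : HasFDerivAt (fun y : EuclideanSpace ℝ (Fin m) => ‖y‖ ^ 2)
      (2 • (innerSL ℝ x)) x := by
    simpa using (hasFDerivAt_id x).norm_sq
  have h2 := h1.sqrt (pow_ne_zero 2 (norm_ne_zero_iff.mpr hx))
  have hnx : ‖x‖ ≠ 0 := norm_ne_zero_iff.mpr hx
  have : (fun y : EuclideanSpace ℝ (Fin m) => Real.sqrt (‖y‖ ^ 2)) = fun y => ‖y‖ := by
    ext y; exact Real.sqrt_sq (norm_nonneg y)
  rw [this] at h2
  convert h2 using 1
  case e'_4 => rfl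
  rw [Real.sqrt_sq (norm_nonneg x)]
  ext v
  simp [smul_smul]
  ring

lemma my_trace_smulRight (c : EuclideanSpace ℝ (Fin m) →L[ℝ] ℝ)
    (w : EuclideanSpace ℝ (Fin m)) :
    LinearMap.trace ℝ (EuclideanSpace ℝ (Fin m))
      ((c.smulRight w : EuclideanSpace ℝ (Fin m) →L[ℝ] EuclideanSpace ℝ (Fin m)) :
        EuclideanSpace ℝ (Fin m) →ₗ[ℝ] EuclideanSpace ℝ (Fin m)) = c w := by
  classical
  set b := (EuclideanSpace.basisFun (Fin m) ℝ).toBasis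
  rw [LinearMap.trace_eq_matrix_trace ℝ b]
  have hw : w = ∑ i, w i • b i := by
    ext j
    rw [WithLp.ofLp_sum, Finset.sum_apply]
    simp [b, EuclideanSpace.basisFun_apply, EuclideanSpace.single_apply]
  rw [Matrix.trace]
  conv_rhs => rw [hw]
  rw [map_sum]
  congr 1
  ext i
  simp [Matrix.diag, LinearMap.toMatrix_apply, b, EuclideanSpace.basisFun_apply, mul_comm]

/-- For `X(x) = γ(|x|)x` and an `n`-dimensional subspace
`S ⊆ ℝ^{n+k}`, the divergence of `X` along `S` at a point `x` with `r = |x| > 0`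
is `div_S X = tr(P_S ∘ DX) = nγ(r) + rγ'(r)(1 − |P_{S^⊥}(x/r)|²)`. -/
theorem stmt4 (n k : ℕ) (γ : ℝ → ℝ) (hγ : ContDiff ℝ 1 γ)
    (hγr : ∀ t, γ t ∈ Set.Icc (0:ℝ) 1)
    (x : EuclideanSpace ℝ (Fin (n + k))) (hx : 0 < ‖x‖)
    (S : Submodule ℝ (EuclideanSpace ℝ (Fin (n + k)))) (hS : Module.finrank ℝ S = n)
    (P : EuclideanSpace ℝ (Fin (n + k)) →L[ℝ] EuclideanSpace ℝ (Fin (n + k)))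
    (hP : P = S.subtypeL.comp S.orthogonalProjection)
    (Pperp : EuclideanSpace ℝ (Fin (n + k)) →L[ℝ] EuclideanSpace ℝ (Fin (n + k)))
    (hPperp : Pperp = Sᗮ.subtypeL.comp Sᗮ.orthogonalProjection)
    (X : EuclideanSpace ℝ (Fin (n + k)) → EuclideanSpace ℝ (Fin (n + k)))
    (hX : X = fun y => γ ‖y‖ • y) :
    LinearMap.trace ℝ (EuclideanSpace ℝ (Fin (n + k)))
        ((P.comp (fderiv ℝ X x)) : EuclideanSpace ℝ (Fin (n + k)) →ₗ[ℝ]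
          EuclideanSpace ℝ (Fin (n + k)))
      = n * γ ‖x‖ + ‖x‖ * deriv γ ‖x‖ * (1 - ‖Pperp (‖x‖⁻¹ • x)‖ ^ 2) := by
  set r := ‖x‖ with hr_def
  have hr : r ≠ 0 := ne_of_gt hx
  have hx0 : x ≠ 0 := fun h => hr (by simp [hr_def, h])
  set d : EuclideanSpace ℝ (Fin (n + k)) →L[ℝ] ℝ := (deriv γ r) • (r⁻¹ • innerSL ℝ x) with hd_def
  -- derivative of X
  have hγd : HasDerivAt γ (deriv γ r) r :=
    ((hγ.differentiable one_ne_zero) r).hasDerivAt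
  have hc : HasFDerivAt (fun y : EuclideanSpace ℝ (Fin (n + k)) => γ ‖y‖) d x :=
    hγd.comp_hasFDerivAt x (my_hasFDerivAt_norm x hx0)
  have hXd : HasFDerivAt X ((γ r) • ContinuousLinearMap.id ℝ (EuclideanSpace ℝ (Fin (n + k))) + d.smulRight x) x := by
    rw [hX]
    exact hc.smul (hasFDerivAt_id x)
  rw [hXd.fderiv]
  -- decompose the composition
  have hcomp : P.comp ((γ r) • ContinuousLinearMap.id ℝ (EuclideanSpace ℝ (Fin (n + k))) + d.smulRight x)
      = (γ r) • P + d.smulRight (P x) := by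
    ext v
    simp
  rw [hcomp]
  have hPS : LinearMap.IsProj S (P : EuclideanSpace ℝ (Fin (n + k)) →ₗ[ℝ] EuclideanSpace ℝ (Fin (n + k))) := by
    refine ⟨fun y => ?_, fun y hy => ?_⟩
    · rw [hP]; exact (S.orthogonalProjection y).2
    · rw [hP]
      simpa using (Submodule.starProjection_eq_self_iff (K := S) (v := y)).mpr hy
  have htrP : LinearMap.trace ℝ (EuclideanSpace ℝ (Fin (n + k))) (P : EuclideanSpace ℝ (Fin (n + k)) →ₗ[ℝ] EuclideanSpace ℝ (Fin (n + k))) = (n : ℝ) := by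
    rw [hPS.trace, hS]
  have hdec : (P x : EuclideanSpace ℝ (Fin (n + k))) + Pperp x = x := by
    rw [hP, hPperp]
    exact Submodule.starProjection_add_starProjection_orthogonal (K := S) x
  have hperp : ⟪(Pperp x : EuclideanSpace ℝ (Fin (n + k))), P x⟫ = 0 := by
    have h1 : (P x : EuclideanSpace ℝ (Fin (n + k))) ∈ S := hPS.map_mem x
    have h2 : (Pperp x : EuclideanSpace ℝ (Fin (n + k))) ∈ Sᗮ := by rw [hPperp]; exact (Sᗮ.orthogonalProjection x).2
    exact Submodule.inner_left_of_mem_orthogonal h1 h2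
  have hxPx : ⟪x, P x⟫ = ‖(P x : EuclideanSpace ℝ (Fin (n + k)))‖ ^ 2 := by
    have h0 : ⟪x - P x, P x⟫ = 0 := by
      have hx' : x - P x = Pperp x := sub_eq_iff_eq_add'.mpr hdec.symm
      rw [hx']; exact hperp
    rw [inner_sub_left] at h0
    rw [← real_inner_self_eq_norm_sq]
    linarith
  have hnormsq : ‖x‖ ^ 2 = ‖(P x : EuclideanSpace ℝ (Fin (n + k)))‖ ^ 2 + ‖(Pperp x : EuclideanSpace ℝ (Fin (n + k)))‖ ^ 2 := by
    have := Submodule.norm_sq_eq_add_norm_sq_projection x S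
    rw [hP, hPperp]
    simpa using this
  have hsmul : ‖Pperp (r⁻¹ • x)‖ ^ 2 = r⁻¹ ^ 2 * ‖(Pperp x : EuclideanSpace ℝ (Fin (n + k)))‖ ^ 2 := by
    rw [Pperp.map_smul, norm_smul]
    simp [abs_of_nonneg (inv_nonneg.mpr (le_of_lt hx)), mul_pow]
  -- compute the trace
  rw [ContinuousLinearMap.coe_add, ContinuousLinearMap.coe_smul, map_add, _root_.map_smul,
    htrP, my_trace_smulRight, hsmul]
  have hdval : d (P x) = deriv γ r * (r⁻¹ * ⟪x, P x⟫) := by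
    simp [hd_def, real_inner_comm]
  rw [hdval, hxPx]
  have hPxsq : ‖(P x : EuclideanSpace ℝ (Fin (n + k)))‖ ^ 2 = r ^ 2 - ‖(Pperp x : EuclideanSpace ℝ (Fin (n + k)))‖ ^ 2 := by
    rw [← hr_def] at hnormsq; linarith
  rw [hPxsq]
  field_simp
  ring
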